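/- For every positive integer n, the generating polynomial of staircase tableaux of size n containing only the symbols α and β, at q = 1, factors as Z_n(1; α, β, 0, 0; 1) = ∏_{j=0}^{n−1} (α + β + j·αβ), as an identity in the polynomial ring ℤ[α, β]. -/

import Mathlib

inductive SLetter : Type
  | A | B | G | D
deriving DecidableEq, Repr

instance instFintypeSLetter : Fintype SLetter :=
  ⟨{SLetter.A, SLetter.B, SLetter.G, SLetter.D}, fun x => by cases x <;> simp⟩

/-- A filling `T` of the staircase Young diagram of shape `(n, n-1, …, 1)`
(boxes `(i,j)` with `i + j < n`, row `i` from the top, column `j` from the left,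
diagonal boxes those with `i + j + 1 = n`) is a staircase tableau if:
boxes outside the shape are unused (empty); no diagonal box is empty;
all boxes to the left of a `β` or `δ` in its row are empty;
all boxes above an `α` or `γ` in its column are empty. -/
def IsStaircase (n : ℕ) (T : Fin n → Fin n → Option SLetter) : Prop :=
  (∀ i j : Fin n, n ≤ (i : ℕ) + (j : ℕ) → T i j = none) ∧
  (∀ i j : Fin n, (i : ℕ) + (j : ℕ) + 1 = n → T i j ≠ none) ∧
  (∀ i j j' : Fin n, j' < j → (T i j = some SLetter.B ∨ T i j = some SLetter.D) →
      T i j' = none) ∧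
  (∀ i i' j : Fin n, i' < i → (T i j = some SLetter.A ∨ T i j = some SLetter.G) →
      T i' j = none)

instance (n : ℕ) : DecidablePred (IsStaircase n) := fun T => by
  unfold IsStaircase; infer_instance

/-- The staircase tableaux of size `n`. -/
def StaircaseTableau (n : ℕ) : Type :=
  {T : Fin n → Fin n → Option SLetter // IsStaircase n T}

instance (n : ℕ) : Fintype (StaircaseTableau n) := Subtype.fintype _

instance (n : ℕ) : DecidableEq (StaircaseTableau n) := Subtype.instDecidableEq

/-- The number of boxes of `T` filled with the symbol `x`. -/
def countLetter (n : ℕ) (T : Fin n → Fin n → Option SLetter) (x : SLetter) : ℕ :=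
  (Finset.univ.filter (fun p : Fin n × Fin n => T p.1 p.2 = some x)).card

/-- The label of the nearest labeled box strictly to the right of `(i,j)` in row `i`. -/
def rightLabel (n : ℕ) (T : Fin n → Fin n → Option SLetter) (i j : Fin n) : Option SLetter :=
  List.findSome? (fun j' => T i j') ((List.finRange n).drop ((j : ℕ) + 1))

/-- The label of the nearest labeled box strictly below `(i,j)` in column `j`. -/
def belowLabel (n : ℕ) (T : Fin n → Fin n → Option SLetter) (i j : Fin n) : Option SLetter :=
  List.findSome? (fun i' => T i' j) ((List.finRange n).drop ((i : ℕ) + 1))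

/-- Whether the (empty) box `(i,j)` receives a `q` in the weight of `T`:
an empty box seeing a `δ` to its right gets `q`; an empty box seeing an `α` or `γ` to
its right and a `β` or `γ` below it gets `q`; all other (empty) boxes get `1`. -/
def boxQ (n : ℕ) (T : Fin n → Fin n → Option SLetter) (i j : Fin n) : Bool :=
  match T i j with
  | some _ => false
  | none =>
    match rightLabel n T i j, belowLabel n T i j with
    | some SLetter.D, _ => true
    | some SLetter.A, some SLetter.B => true
    | some SLetter.A, some SLetter.G => true
    | some SLetter.G, some SLetter.B => true
    | some SLetter.G, some SLetter.G => true
    | _, _ => false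

/-- The exponent of `q` in the weight of `T`. -/
def qCount (n : ℕ) (T : Fin n → Fin n → Option SLetter) : ℕ :=
  (Finset.univ.filter (fun p : Fin n × Fin n => boxQ n T p.1 p.2 = true)).card

/-- The type of `T`, as a word in `Fin n → Bool`, read off the diagonal boxes from
northeast (index `0`) to southwest (index `n-1`): `true` (a `•`) for each `α` or `δ`,
`false` (a `∘`) for each `β` or `γ`. -/
def typeWord (n : ℕ) (T : Fin n → Fin n → Option SLetter) : Fin n → Bool := fun i =>
  match T i ⟨n - 1 - (i : ℕ), by have := i.isLt; omega⟩ with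
  | some SLetter.A => true
  | some SLetter.D => true
  | _ => false

/-- `t(T)`, the number of `•`'s in the type of `T`. -/
def bulletCount (n : ℕ) (T : Fin n → Fin n → Option SLetter) : ℕ :=
  (Finset.univ.filter (fun i : Fin n => typeWord n T i = true)).card

/-- The weight of a staircase tableau: the product of all its labels, with each empty
box contributing `q` or `1` according to the rules (`u` is set to `1`). -/
def stWt {R : Type*} [CommSemiring R] (n : ℕ) (a b g d q : R)
    (T : Fin n → Fin n → Option SLetter) : R :=
  a ^ countLetter n T SLetter.A * b ^ countLetter n T SLetter.B *
    g ^ countLetter n T SLetter.G * d ^ countLetter n T SLetter.D * q ^ qCount n T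

/-- The fugacity partition function `Z_n(y; α, β, γ, δ; q) = Σ_T wt(T) y^{t(T)}`,
summed over all staircase tableaux of size `n`. -/
def stZ (R : Type*) [CommSemiring R] (n : ℕ) (y a b g d q : R) : R :=
  ∑ T : StaircaseTableau n, stWt n a b g d q T.val * y ^ bulletCount n T.val

/-- The generating polynomial `Z_σ(α, β, γ, δ; q)` of staircase tableaux of a given
type `σ` (encoded as a list of booleans, `true` = `•`, `false` = `∘`). -/
def stZw (R : Type*) [CommSemiring R] (w : List Bool) (a b g d q : R) : R :=
  ∑ T ∈ Finset.univ.filter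
      (fun T : StaircaseTableau w.length => List.ofFn (typeWord w.length T.val) = w),
    stWt w.length a b g d q T.val

namespace SP

open Finset SLetter

abbrev Tab (m : ℕ) := Fin m → Fin m → Option SLetter

/-- `T` uses only the letters `α`, `β`. -/
def ABcond (m : ℕ) (T : Tab m) : Prop :=
  ∀ i j, T i j ≠ some G ∧ T i j ≠ some D

instance (m : ℕ) : DecidablePred (ABcond m) := fun _ => by unfold ABcond; infer_instance

/-- All α/β staircase tableaux of size `m`, as fillings. -/
def ABs (m : ℕ) : Finset (Tab m) :=
  univ.filter (fun T => IsStaircase m T ∧ ABcond m T)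

lemma mem_ABs {m : ℕ} {T : Tab m} : T ∈ ABs m ↔ IsStaircase m T ∧ ABcond m T := by
  simp [ABs]

/-- Columns of `T` containing no `α`. -/
def Free (m : ℕ) (T : Tab m) : Finset (Fin m) :=
  univ.filter (fun j => ∀ i, T i j ≠ some A)

/-- Admissible first rows over a tableau `T'` of size `m`. -/
def AdmP (m : ℕ) (T' : Tab m) (r : Fin (m+1) → Option SLetter) : Prop :=
  r (Fin.last m) ≠ none ∧
  (∀ j, r j ≠ some G ∧ r j ≠ some D) ∧
  (∀ j j' : Fin (m+1), j' < j → r j = some B → r j' = none) ∧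
  (∀ j : Fin m, r j.castSucc ≠ none → ∀ i, T' i j ≠ some A)

instance (m : ℕ) (T' : Tab m) : DecidablePred (AdmP m T') := fun _ => by
  unfold AdmP; infer_instance

def Adm (m : ℕ) (T' : Tab m) : Finset (Fin (m+1) → Option SLetter) :=
  univ.filter (AdmP m T')

lemma mem_Adm {m : ℕ} {T' : Tab m} {r} : r ∈ Adm m T' ↔ AdmP m T' r := by simp [Adm]

/-- Delete the first row. -/
def rho (m : ℕ) (T : Tab (m+1)) : Tab m := fun i j => T i.succ j.castSucc

/-- Prepend a first row `r` to `T'`. -/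
def ext (m : ℕ) (T' : Tab m) (r : Fin (m+1) → Option SLetter) : Tab (m+1) :=
  fun i j => Fin.cases (r j) (fun i' => Fin.lastCases none (fun j' => T' i' j') j) i

@[simp] lemma ext_zero (m : ℕ) (T' : Tab m) (r) (j : Fin (m+1)) :
    ext m T' r 0 j = r j := by simp [ext]

@[simp] lemma ext_succ_cast (m : ℕ) (T' : Tab m) (r) (i j : Fin m) :
    ext m T' r i.succ j.castSucc = T' i j := by simp [ext]

@[simp] lemma ext_succ_last (m : ℕ) (T' : Tab m) (r) (i : Fin m) :
    ext m T' r i.succ (Fin.last m) = none := by simp [ext]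

end SP

namespace SP
open Finset SLetter

lemma rho_mem (m : ℕ) (T : Tab (m+1)) (hT : T ∈ ABs (m+1)) : rho m T ∈ ABs m := by
  obtain ⟨⟨h1, h2, h3, h4⟩, hAB⟩ := mem_ABs.mp hT
  refine mem_ABs.mpr ⟨⟨?_, ?_, ?_, ?_⟩, ?_⟩
  · intro i j h
    exact h1 i.succ j.castSucc (by simp; omega)
  · intro i j h
    exact h2 i.succ j.castSucc (by simp; omega)
  · intro i j j' hlt hB
    exact h3 i.succ j.castSucc j'.castSucc (by simpa using hlt) hB
  · intro i i' j hlt hA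
    exact h4 i.succ i'.succ j.castSucc (by simpa using hlt) hA
  · intro i j; exact hAB _ _

lemma row_mem (m : ℕ) (T : Tab (m+1)) (hT : T ∈ ABs (m+1)) :
    (fun j => T 0 j) ∈ Adm m (rho m T) := by
  obtain ⟨⟨h1, h2, h3, h4⟩, hAB⟩ := mem_ABs.mp hT
  refine mem_Adm.mpr ⟨?_, ?_, ?_, ?_⟩
  · exact h2 0 (Fin.last m) (by simp)
  · intro j; exact hAB _ _
  · intro j j' hlt hB
    exact h3 0 j j' hlt (Or.inl hB)
  · intro j hne i hA
    exact hne (h4 i.succ 0 j.castSucc (Fin.succ_pos i) (Or.inl hA))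

lemma ext_mem (m : ℕ) (T' : Tab m) (r) (h1 : T' ∈ ABs m) (h2 : r ∈ Adm m T') :
    ext m T' r ∈ ABs (m+1) := by
  obtain ⟨⟨s1, s2, s3, s4⟩, sAB⟩ := mem_ABs.mp h1
  obtain ⟨a1, a2, a3, a4⟩ := mem_Adm.mp h2
  refine mem_ABs.mpr ⟨⟨?_, ?_, ?_, ?_⟩, ?_⟩
  · -- out of shape
    intro i j h
    induction i using Fin.cases with
    | zero => simp at h; omega
    | succ i' =>
      induction j using Fin.lastCases with
      | last => simp
      | cast j' =>
        simp only [ext_succ_cast]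
        apply s1
        simp at h; omega
  · -- diagonal nonempty
    intro i j h
    induction i using Fin.cases with
    | zero =>
      have hj : j = Fin.last m := by
        apply Fin.ext; simp at h ⊢; omega
      subst hj
      simpa using a1
    | succ i' =>
      induction j using Fin.lastCases with
      | last => simp at h
      | cast j' =>
        simp only [ext_succ_cast]
        apply s2
        simp at h; omega
  · -- left of B/D empty
    intro i j j' hlt hBD
    induction i using Fin.cases with
    | zero =>
      simp only [ext_zero] at hBD ⊢
      rcases hBD with hB | hD
      · exact a3 j j' hlt hB
      · exact absurd hD (a2 j).2
    | succ i' =>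
      induction j using Fin.lastCases with
      | last => simp at hBD
      | cast j =>
        simp only [ext_succ_cast] at hBD
        have hj' : (j' : ℕ) < m := by
          have := hlt
          simp [Fin.lt_def] at this
          have := j.isLt; omega
        have e : j' = (⟨(j' : ℕ), hj'⟩ : Fin m).castSucc := by
          apply Fin.ext; simp
        rw [e, ext_succ_cast]
        rcases hBD with hB | hD
        · exact s3 i' j ⟨(j' : ℕ), hj'⟩ (by simp [Fin.lt_def] at hlt ⊢; omega) (Or.inl hB)
        · exact absurd hD (sAB _ _).2
  · -- above A/G empty
    intro i i' j hlt hAG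
    induction i using Fin.cases with
    | zero => exact absurd hlt (by simp [Fin.lt_def])
    | succ i0 =>
      induction j using Fin.lastCases with
      | last => simp at hAG
      | cast j =>
        simp only [ext_succ_cast] at hAG
        have hA : T' i0 j = some A := by
          rcases hAG with h | h
          · exact h
          · exact absurd h (sAB _ _).1
        induction i' using Fin.cases with
        | zero =>
          simp only [ext_zero]
          by_contra hne
          exact a4 j hne i0 hA
        | succ i1 =>
          simp only [ext_succ_cast]
          exact s4 i0 i1 j (by simpa using hlt) (Or.inl hA)
  · -- AB
    intro i j
    induction i using Fin.cases with
    | zero => simp only [ext_zero]; exact a2 j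
    | succ i0 =>
      induction j using Fin.lastCases with
      | last => simp
      | cast j => simp only [ext_succ_cast]; exact sAB _ _

lemma rho_ext (m : ℕ) (T' : Tab m) (r) : rho m (ext m T' r) = T' := by
  funext i j; simp [rho]

lemma ext_row (m : ℕ) (T' : Tab m) (r) : (fun j => ext m T' r 0 j) = r := by
  funext j; simp

lemma ext_rho (m : ℕ) (T : Tab (m+1)) (hT : T ∈ ABs (m+1)) :
    ext m (rho m T) (fun j => T 0 j) = T := by
  obtain ⟨⟨h1, h2, h3, h4⟩, hAB⟩ := mem_ABs.mp hT
  funext i j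
  induction i using Fin.cases with
  | zero => simp
  | succ i' =>
    induction j using Fin.lastCases with
    | last =>
      simp only [ext_succ_last]
      exact (h1 i'.succ (Fin.last m) (by simp)).symm
    | cast j' => simp [rho]

end SP

namespace SP
open Finset SLetter

lemma countLetter_eq (m : ℕ) (T : Tab m) (x : SLetter) :
    countLetter m T x = ∑ i : Fin m, ∑ j : Fin m, (if T i j = some x then 1 else 0) := by
  rw [countLetter, Finset.card_filter]
  exact Fintype.sum_prod_type (f := fun p : Fin m × Fin m => if T p.1 p.2 = some x then 1 else 0)

lemma countLetter_ext (m : ℕ) (T' : Tab m) (r) (x : SLetter) :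
    countLetter (m+1) (ext m T' r) x
      = (univ.filter (fun j => r j = some x)).card + countLetter m T' x := by
  rw [countLetter_eq, countLetter_eq, Fin.sum_univ_succ, Finset.card_filter]
  congr 1
  calc ∑ i : Fin m, ∑ j : Fin (m+1), (if ext m T' r i.succ j = some x then 1 else 0)
      = ∑ i : Fin m, ((∑ j : Fin m, if ext m T' r i.succ j.castSucc = some x then 1 else 0)
          + (if ext m T' r i.succ (Fin.last m) = some x then 1 else 0)) :=
        Finset.sum_congr rfl (fun i _ => Fin.sum_univ_castSucc _)
    _ = ∑ i : Fin m, ∑ j : Fin m, (if T' i j = some x then 1 else 0) := by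
        apply Finset.sum_congr rfl; intro i _; simp

lemma free_ext (m : ℕ) (T' : Tab m) (r) :
    (Free (m+1) (ext m T' r)).card
      = ((Free m T').filter (fun j => r j.castSucc ≠ some A)).card
        + (if r (Fin.last m) = some A then 0 else 1) := by
  have hff : (Free m T').filter (fun j => r j.castSucc ≠ some A)
      = univ.filter (fun j : Fin m => (∀ i, T' i j ≠ some A) ∧ r j.castSucc ≠ some A) := by
    rw [Free, Finset.filter_filter]
  rw [Free, Finset.card_filter, Fin.sum_univ_castSucc, hff, Finset.card_filter]
  congr 1
  · apply Finset.sum_congr rfl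
    intro j _
    congr 1
    apply propext
    constructor
    · intro h
      refine ⟨fun i => ?_, ?_⟩
      · have := h i.succ; simpa using this
      · have := h 0; simpa using this
    · intro ⟨h1, h2⟩ i
      induction i using Fin.cases with
      | zero => simpa using h2
      | succ i0 => simpa using h1 i0
  · have heq : (∀ i : Fin (m+1), ext m T' r i (Fin.last m) ≠ some A) ↔ r (Fin.last m) ≠ some A := by
      constructor
      · intro h; have := h 0; simpa using this
      · intro h i
        induction i using Fin.cases with
        | zero => simpa using h
        | succ i0 => simp
    by_cases h : r (Fin.last m) = some A
    · rw [if_pos h, if_neg (fun hh => heq.mp hh h)]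
    · rw [if_neg h, if_pos (heq.mpr h)]

lemma stepA {R : Type*} [CommSemiring R] (m : ℕ) (F : Tab (m+1) → R) :
    ∑ T ∈ ABs (m+1), F T = ∑ T' ∈ ABs m, ∑ r ∈ Adm m T', F (ext m T' r) := by
  rw [← Finset.sum_sigma (ABs m) (fun T' => Adm m T') (fun p => F (ext m p.1 p.2))]
  apply Finset.sum_nbij' (i := fun T => (⟨rho m T, fun j => T 0 j⟩ :
      (_ : Tab m) × (Fin (m+1) → Option SLetter)))
    (j := fun p => ext m p.1 p.2)
  · intro T hT
    exact Finset.mem_sigma.mpr ⟨rho_mem m T hT, row_mem m T hT⟩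
  · intro p hp
    obtain ⟨hp1, hp2⟩ := Finset.mem_sigma.mp hp
    exact ext_mem m p.1 p.2 hp1 hp2
  · intro T hT
    exact ext_rho m T hT
  · intro p hp
    refine Sigma.ext ?_ ?_
    · simpa using rho_ext m p.1 p.2
    · simpa using heq_of_eq (ext_row m p.1 p.2)
  · intro T hT
    rw [ext_rho m T hT]

end SP

namespace SP
open Finset SLetter

/-- positions of letters in the row encoded by `S` (plus the forced diagonal `last`). -/
def pos (m : ℕ) (S : Finset (Fin m)) (j : Fin (m+1)) : Prop :=
  j = Fin.last m ∨ ∃ j' ∈ S, Fin.castSucc j' = j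

instance (m : ℕ) (S : Finset (Fin m)) : DecidablePred (pos m S) := fun _ => by
  unfold pos; infer_instance

lemma pos_last (m : ℕ) (S : Finset (Fin m)) : pos m S (Fin.last m) := Or.inl rfl

lemma pos_castSucc (m : ℕ) (S : Finset (Fin m)) (j : Fin m) :
    pos m S j.castSucc ↔ j ∈ S := by
  constructor
  · rintro (h | ⟨j', hj', he⟩)
    · exact absurd h (ne_of_lt (Fin.castSucc_lt_last j))
    · rwa [← Fin.castSucc_injective m he]
  · intro h; exact Or.inr ⟨j, h, rfl⟩

/-- the position of the leftmost letter. -/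
def minpos (m : ℕ) (S : Finset (Fin m)) : Fin (m+1) :=
  (univ.filter (pos m S)).min' ⟨Fin.last m, by simp [pos_last]⟩

lemma pos_minpos (m : ℕ) (S : Finset (Fin m)) : pos m S (minpos m S) :=
  (mem_filter.mp ((univ.filter (pos m S)).min'_mem _)).2

lemma minpos_le (m : ℕ) (S : Finset (Fin m)) {j} (h : pos m S j) : minpos m S ≤ j :=
  Finset.min'_le _ _ (by simp [h])

lemma lt_minpos (m : ℕ) (S : Finset (Fin m)) {k} (h : k < minpos m S) : ¬ pos m S k :=
  fun hp => absurd (minpos_le m S hp) (not_le.mpr h)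

lemma eq_minpos_iff (m : ℕ) (S : Finset (Fin m)) {j} :
    (pos m S j ∧ ∀ k, k < j → ¬ pos m S k) ↔ j = minpos m S := by
  constructor
  · rintro ⟨h1, h2⟩
    refine le_antisymm ?_ (minpos_le m S h1)
    by_contra hlt
    exact h2 _ (not_le.mp hlt) (pos_minpos m S)
  · rintro rfl
    exact ⟨pos_minpos m S, fun k hk => lt_minpos m S hk⟩

/-- The row encoded by a flag `bb` (is the leftmost letter a `β`?) and a set `S`
of non-diagonal letter positions. -/
def mk (m : ℕ) (bb : Bool) (S : Finset (Fin m)) : Fin (m+1) → Option SLetter :=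
  fun j => if pos m S j then
      (if bb = true ∧ ∀ k, k < j → ¬ pos m S k then some B else some A)
    else none

lemma mk_eq_B_iff (m : ℕ) (bb : Bool) (S : Finset (Fin m)) (j : Fin (m+1)) :
    mk m bb S j = some B ↔ bb = true ∧ j = minpos m S := by
  constructor
  · intro h
    rw [mk] at h
    split_ifs at h with h1 h2
    · exact ⟨h2.1, (eq_minpos_iff m S).mp ⟨h1, h2.2⟩⟩
    · cases h
  · rintro ⟨hbb, rfl⟩
    rw [mk, if_pos (pos_minpos m S),
      if_pos ⟨hbb, fun k hk => lt_minpos m S hk⟩]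

lemma mk_eq_none_iff (m : ℕ) (bb : Bool) (S : Finset (Fin m)) (j : Fin (m+1)) :
    mk m bb S j = none ↔ ¬ pos m S j := by
  rw [mk]
  split_ifs with h1 h2 <;> simp [h1]

lemma mk_eq_A_iff (m : ℕ) (bb : Bool) (S : Finset (Fin m)) (j : Fin (m+1)) :
    mk m bb S j = some A ↔ pos m S j ∧ ¬(bb = true ∧ j = minpos m S) := by
  rw [mk]
  split_ifs with h1 h2
  · simp only [Option.some.injEq]
    constructor
    · intro h; cases h
    · rintro ⟨-, hno⟩
      exact absurd ⟨h2.1, (eq_minpos_iff m S).mp ⟨h1, h2.2⟩⟩ hno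
  · simp only [Option.some.injEq, true_iff, h1, true_and]
    rintro ⟨hbb, rfl⟩
    exact h2 ⟨hbb, fun k hk => lt_minpos m S hk⟩
  · simp [h1]

lemma mk_mem (m : ℕ) (T' : Tab m) (bb : Bool) (S : Finset (Fin m))
    (hS : S ⊆ Free m T') : mk m bb S ∈ Adm m T' := by
  refine mem_Adm.mpr ⟨?_, ?_, ?_, ?_⟩
  · intro h; rw [mk_eq_none_iff] at h; exact h (pos_last m S)
  · intro j
    constructor <;> · intro h; rw [mk] at h; split_ifs at h <;> simp_all
  · intro j j' hlt hB
    rw [mk_eq_B_iff] at hB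
    rw [mk_eq_none_iff]
    exact lt_minpos m S (hB.2 ▸ hlt)
  · intro j hne i hA
    rw [Ne, mk_eq_none_iff, not_not, pos_castSucc] at hne
    have hmem := hS hne
    rw [Free, mem_filter] at hmem
    exact hmem.2 i hA

def Sof (m : ℕ) (r : Fin (m+1) → Option SLetter) : Finset (Fin m) :=
  univ.filter (fun j => r j.castSucc ≠ none)

def bof (m : ℕ) (r : Fin (m+1) → Option SLetter) : Bool := decide (∃ j, r j = some B)

lemma Sof_mk (m : ℕ) (bb : Bool) (S : Finset (Fin m)) : Sof m (mk m bb S) = S := by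
  ext j
  simp [Sof, Ne, mk_eq_none_iff, pos_castSucc]

lemma bof_mk (m : ℕ) (bb : Bool) (S : Finset (Fin m)) : bof m (mk m bb S) = bb := by
  cases bb
  · simp [bof, mk_eq_B_iff]
  · simp only [bof, decide_eq_true_eq]
    exact ⟨minpos m S, (mk_eq_B_iff m true S _).mpr ⟨rfl, rfl⟩⟩

lemma mk_of_adm (m : ℕ) (T' : Tab m) (r) (hr : r ∈ Adm m T') :
    mk m (bof m r) (Sof m r) = r := by
  obtain ⟨a1, a2, a3, a4⟩ := mem_Adm.mp hr
  have hpos : ∀ j, pos m (Sof m r) j ↔ r j ≠ none := by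
    intro j
    induction j using Fin.lastCases with
    | last => exact iff_of_true (pos_last m _) a1
    | cast j => rw [pos_castSucc]; simp [Sof]
  funext j
  by_cases hn : r j = none
  · rw [hn, mk_eq_none_iff, hpos]
    exact fun h => h hn
  · cases hL : r j with
    | none => exact absurd hL hn
    | some l =>
      cases l with
      | G => exact absurd hL (a2 j).1
      | D => exact absurd hL (a2 j).2
      | A =>
        rw [mk_eq_A_iff]
        refine ⟨(hpos j).mpr hn, ?_⟩
        rintro ⟨hb, rfl⟩
        obtain ⟨k, hk⟩ := of_decide_eq_true hb
        rcases lt_trichotomy k (minpos m (Sof m r)) with h | h | h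
        · exact lt_minpos m _ h ((hpos k).mpr (by simp [hk]))
        · rw [h] at hk; rw [hk] at hL; cases hL
        · have := a3 k _ h hk
          exact hn this
      | B =>
        rw [mk_eq_B_iff]
        refine ⟨decide_eq_true ⟨j, hL⟩, ?_⟩
        apply (eq_minpos_iff m _).mp
        refine ⟨(hpos j).mpr hn, fun k hk hp => ?_⟩
        exact ((hpos k).mp hp) (a3 j k hk hL)

lemma card_mk_B (m : ℕ) (bb : Bool) (S : Finset (Fin m)) :
    (univ.filter (fun j => mk m bb S j = some B)).card = if bb then 1 else 0 := by
  have h : univ.filter (fun j => mk m bb S j = some B)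
      = if bb then {minpos m S} else ∅ := by
    ext j; cases bb <;> simp [mk_eq_B_iff]
  rw [h]; cases bb <;> simp

lemma card_posSet (m : ℕ) (S : Finset (Fin m)) :
    (univ.filter (pos m S)).card = S.card + 1 := by
  have h : univ.filter (pos m S)
      = insert (Fin.last m) (S.map (Fin.castSuccEmb)) := by
    ext j
    simp only [mem_filter, mem_univ, true_and, pos, Finset.mem_insert, Finset.mem_map]
    constructor
    · rintro (h | ⟨j', hj', he⟩)
      · exact Or.inl h
      · exact Or.inr ⟨j', hj', he⟩
    · rintro (h | ⟨j', hj', he⟩)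
      · exact Or.inl h
      · exact Or.inr ⟨j', hj', he⟩
  rw [h, card_insert_of_notMem, card_map]
  simp only [Finset.mem_map, not_exists]
  rintro j' ⟨hj', he⟩
  exact absurd he (ne_of_lt (Fin.castSucc_lt_last j'))

lemma card_mk_A (m : ℕ) (bb : Bool) (S : Finset (Fin m)) :
    (univ.filter (fun j => mk m bb S j = some A)).card
      = if bb then S.card else S.card + 1 := by
  cases bb
  · have h : univ.filter (fun j => mk m false S j = some A) = univ.filter (pos m S) := by
      ext j; simp [mk_eq_A_iff]
    rw [h, card_posSet]; rfl
  · have h : univ.filter (fun j => mk m true S j = some A)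
        = (univ.filter (pos m S)).erase (minpos m S) := by
      ext j
      simp only [mem_filter, mem_univ, true_and, Finset.mem_erase, mk_eq_A_iff,
        true_and]
      tauto
    rw [h, Finset.card_erase_of_mem (by simp [pos_minpos]), card_posSet]
    simp

lemma minpos_empty (m : ℕ) : minpos m (∅ : Finset (Fin m)) = Fin.last m := by
  symm
  apply (eq_minpos_iff m ∅).mp
  refine ⟨pos_last m ∅, fun k hk hp => ?_⟩
  rcases hp with h | ⟨j', hj', -⟩
  · exact absurd h (ne_of_lt hk)
  · exact absurd hj' (Finset.notMem_empty j')

lemma minpos_nonempty (m : ℕ) (S : Finset (Fin m)) (hS : S.Nonempty) :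
    minpos m S = (S.min' hS).castSucc := by
  symm
  apply (eq_minpos_iff m S).mp
  refine ⟨(pos_castSucc m S _).mpr (S.min'_mem hS), fun k hk hp => ?_⟩
  rcases hp with rfl | ⟨j', hj', rfl⟩
  · exact absurd (lt_trans hk (Fin.castSucc_lt_last _)) (lt_irrefl _)
  · rw [Fin.castSucc_lt_castSucc_iff] at hk
    exact absurd (S.min'_le j' hj') (not_le.mpr hk)

end SP

namespace SP
open Finset SLetter

lemma e_mk (m : ℕ) (T' : Tab m) (bb : Bool) (S : Finset (Fin m))
    (hS : S ⊆ Free m T') :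
    ((Free m T').filter (fun j => mk m bb S j.castSucc ≠ some A)).card
      + (if mk m bb S (Fin.last m) = some A then 0 else 1)
    = ((Free m T') \ S).card + (if bb then 1 else 0) := by
  have hcs : ∀ j : Fin m, (mk m bb S j.castSucc = some A)
      ↔ (j ∈ S ∧ ¬(bb = true ∧ j.castSucc = minpos m S)) := by
    intro j; rw [mk_eq_A_iff, pos_castSucc]
  cases bb with
  | false =>
    have h1 : (Free m T').filter (fun j => mk m false S j.castSucc ≠ some A)
        = Free m T' \ S := by
      ext j
      rw [mem_filter, Finset.mem_sdiff]
      simp [hcs]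
    have h2 : mk m false S (Fin.last m) = some A := by
      rw [mk_eq_A_iff]; exact ⟨pos_last m S, by simp⟩
    rw [h1, h2]; simp
  | true =>
    rcases eq_or_ne S ∅ with rfl | hne
    · have h1 : (Free m T').filter (fun j => mk m true ∅ j.castSucc ≠ some A)
          = Free m T' := by
        apply Finset.filter_true_of_mem
        intro j _
        rw [Ne, hcs]
        rintro ⟨hj, -⟩
        exact absurd hj (Finset.notMem_empty j)
      have h2 : mk m true ∅ (Fin.last m) = some B := by
        rw [mk_eq_B_iff, minpos_empty]; exact ⟨rfl, rfl⟩
      rw [h1, h2]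
      simp
    · have hne' : S.Nonempty := Finset.nonempty_iff_ne_empty.mpr hne
      have hmp : minpos m S = (S.min' hne').castSucc := minpos_nonempty m S hne'
      have h2 : mk m true S (Fin.last m) = some A := by
        rw [mk_eq_A_iff]
        refine ⟨pos_last m S, ?_⟩
        rintro ⟨-, hl⟩
        rw [hmp] at hl
        exact absurd hl.symm (ne_of_lt (Fin.castSucc_lt_last _))
      have h1 : (Free m T').filter (fun j => mk m true S j.castSucc ≠ some A)
          = insert (S.min' hne') ((Free m T') \ S) := by
        ext j
        rw [mem_filter, Finset.mem_insert, Finset.mem_sdiff, Ne, hcs]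
        constructor
        · rintro ⟨hf, hA⟩
          by_cases hjS : j ∈ S
          · left
            by_contra hnej
            apply hA
            refine ⟨hjS, ?_⟩
            rintro ⟨-, hcast⟩
            rw [hmp] at hcast
            exact hnej (Fin.castSucc_injective m hcast)
          · exact Or.inr ⟨hf, hjS⟩
        · rintro (rfl | ⟨hf, hjS⟩)
          · refine ⟨hS (S.min'_mem hne'), ?_⟩
            rintro ⟨-, hno⟩
            exact hno ⟨rfl, hmp.symm⟩
          · exact ⟨hf, fun hh => hjS hh.1⟩
      rw [h1, h2, Finset.card_insert_of_notMem]
      · simp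
      · rw [Finset.mem_sdiff]
        rintro ⟨-, hno⟩
        exact hno (S.min'_mem hne')

lemma stepB {R : Type*} [CommSemiring R] (a b x : R) (m : ℕ) (T' : Tab m) :
    ∑ r ∈ Adm m T',
        a ^ (univ.filter (fun j => r j = some A)).card
      * b ^ (univ.filter (fun j => r j = some B)).card
      * x ^ (((Free m T').filter (fun j => r j.castSucc ≠ some A)).card
          + (if r (Fin.last m) = some A then 0 else 1))
    = (a + b * x) * (a + x) ^ (Free m T').card := by
  have h1 : ∑ p ∈ (univ : Finset Bool) ×ˢ (Free m T').powerset,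
      (a ^ (if p.1 then p.2.card else p.2.card + 1) * b ^ (if p.1 then 1 else 0)
        * x ^ (((Free m T') \ p.2).card + (if p.1 then 1 else 0)))
      = ∑ r ∈ Adm m T',
          a ^ (univ.filter (fun j => r j = some A)).card
        * b ^ (univ.filter (fun j => r j = some B)).card
        * x ^ (((Free m T').filter (fun j => r j.castSucc ≠ some A)).card
            + (if r (Fin.last m) = some A then 0 else 1)) := by
    apply Finset.sum_nbij' (i := fun p => mk m p.1 p.2) (j := fun r => (bof m r, Sof m r))
    · intro p hp
      exact mk_mem m T' p.1 p.2 (Finset.mem_powerset.mp (Finset.mem_product.mp hp).2)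
    · intro r hr
      refine Finset.mem_product.mpr ⟨mem_univ _, Finset.mem_powerset.mpr ?_⟩
      intro j hj
      rw [Sof, mem_filter] at hj
      obtain ⟨-, -, -, a4⟩ := mem_Adm.mp hr
      rw [Free, mem_filter]
      exact ⟨mem_univ _, a4 j hj.2⟩
    · intro p hp
      exact Prod.ext (bof_mk m p.1 p.2) (Sof_mk m p.1 p.2)
    · intro r hr
      exact mk_of_adm m T' r hr
    · intro p hp
      have hsub := Finset.mem_powerset.mp (Finset.mem_product.mp hp).2
      rw [card_mk_A, card_mk_B, e_mk m T' p.1 p.2 hsub]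
  rw [← h1, Finset.sum_product]
  have hbool : ∀ f : Bool → R, ∑ bb ∈ (univ : Finset Bool), f bb = f true + f false :=
    fun f => by simp [Fintype.sum_bool]
  rw [hbool]
  simp only [if_true, if_false, pow_one, pow_zero, mul_one, reduceIte]
  have hpa : ∑ S ∈ (Free m T').powerset, a ^ S.card * x ^ ((Free m T') \ S).card
      = (a + x) ^ (Free m T').card := by
    have h := Finset.prod_add (fun _ : Fin m => a) (fun _ : Fin m => x) (Free m T')
    simp only [Finset.prod_const] at h
    exact h.symm
  rw [← hpa, Finset.mul_sum, ← Finset.sum_add_distrib]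
  apply Finset.sum_congr rfl
  intro S _
  simp only [if_neg Bool.false_ne_true, pow_zero, pow_one, mul_one]
  ring

end SP

namespace SP
open Finset SLetter

lemma ABs_zero : ABs 0 = (univ : Finset (Tab 0)) := by
  rw [ABs]
  apply Finset.filter_true_of_mem
  intro T _
  exact ⟨⟨fun i => i.elim0, fun i => i.elim0, fun i => i.elim0, fun i => i.elim0⟩,
    fun i => i.elim0⟩

lemma Hsum {R : Type*} [CommSemiring R] (a b : R) (m : ℕ) :
    ∀ x : R,
      (∑ T ∈ ABs m, a ^ countLetter m T SLetter.A * b ^ countLetter m T SLetter.B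
          * x ^ (Free m T).card)
        = ∏ j ∈ Finset.range m, (a + b * (x + (j : R) * a)) := by
  induction m with
  | zero =>
    intro x
    rw [Finset.range_zero, Finset.prod_empty, ABs_zero]
    have h : ∀ T ∈ (univ : Finset (Tab 0)),
        a ^ countLetter 0 T SLetter.A * b ^ countLetter 0 T SLetter.B
          * x ^ (Free 0 T).card = 1 := by
      intro T _
      simp [countLetter, Free]
    rw [Finset.sum_congr rfl h, Finset.sum_const, Finset.card_univ]
    haveI : Unique (Tab 0) := Pi.uniqueOfIsEmpty _
    rw [Fintype.card_unique]
    simp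
  | succ m ih =>
    intro x
    rw [stepA m (fun T => a ^ countLetter (m+1) T SLetter.A
      * b ^ countLetter (m+1) T SLetter.B * x ^ (Free (m+1) T).card)]
    have hinner : ∀ T' ∈ ABs m,
        (∑ r ∈ Adm m T', a ^ countLetter (m+1) (ext m T' r) SLetter.A
            * b ^ countLetter (m+1) (ext m T' r) SLetter.B
            * x ^ (Free (m+1) (ext m T' r)).card)
          = (a ^ countLetter m T' SLetter.A * b ^ countLetter m T' SLetter.B
              * (a + x) ^ (Free m T').card) * (a + b * x) := by
      intro T' hT'
      calc ∑ r ∈ Adm m T', a ^ countLetter (m+1) (ext m T' r) SLetter.A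
            * b ^ countLetter (m+1) (ext m T' r) SLetter.B
            * x ^ (Free (m+1) (ext m T' r)).card
          = ∑ r ∈ Adm m T',
              (a ^ countLetter m T' SLetter.A * b ^ countLetter m T' SLetter.B) *
              (a ^ (univ.filter (fun j => r j = some A)).card
                * b ^ (univ.filter (fun j => r j = some B)).card
                * x ^ (((Free m T').filter (fun j => r j.castSucc ≠ some A)).card
                    + (if r (Fin.last m) = some A then 0 else 1))) := by
            apply Finset.sum_congr rfl
            intro r _
            rw [countLetter_ext, countLetter_ext, free_ext, pow_add, pow_add]
            ring
        _ = (a ^ countLetter m T' SLetter.A * b ^ countLetter m T' SLetter.B) *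
              ((a + b * x) * (a + x) ^ (Free m T').card) := by
            rw [← Finset.mul_sum, stepB]
        _ = (a ^ countLetter m T' SLetter.A * b ^ countLetter m T' SLetter.B
              * (a + x) ^ (Free m T').card) * (a + b * x) := by ring
    rw [Finset.sum_congr rfl hinner, ← Finset.sum_mul, ih (a + x),
      Finset.prod_range_succ']
    congr 1
    · apply Finset.prod_congr rfl
      intro j _
      push_cast
      ring
    · push_cast
      ring

lemma countG_zero (m : ℕ) (T : Tab m) (h : ABcond m T) :
    countLetter m T SLetter.G = 0 := by
  rw [countLetter, Finset.card_eq_zero, Finset.filter_eq_empty_iff]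
  intro p _
  exact (h p.1 p.2).1

lemma countD_zero (m : ℕ) (T : Tab m) (h : ABcond m T) :
    countLetter m T SLetter.D = 0 := by
  rw [countLetter, Finset.card_eq_zero, Finset.filter_eq_empty_iff]
  intro p _
  exact (h p.1 p.2).2

end SP


open MvPolynomial in
/-- For every positive integer `n`, the generating polynomial of staircase tableaux of size
`n` with only `α`'s and `β`'s, at `q = 1`, factors as
`Z_n(1; α, β, 0, 0; 1) = ∏_{j=0}^{n-1} (α + β + j·αβ)` in `ℤ[α, β]`. -/
theorem staircase_partition_alpha_beta_q_one (n : ℕ) (hn : 1 ≤ n) :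
    stZ (MvPolynomial (Fin 2) ℤ) n 1 (X 0) (X 1) 0 0 1 =
      ∏ j ∈ Finset.range n,
        (X 0 + X 1 + (j : MvPolynomial (Fin 2) ℤ) * (X 0 * X 1)) := by
  classical
  set R := MvPolynomial (Fin 2) ℤ
  set a : R := X 0
  set b : R := X 1
  -- Step 1: subtype sum to finset sum
  have h0 : stZ R n 1 a b 0 0 1
      = ∑ T ∈ Finset.univ.filter (IsStaircase n), stWt n a b 0 0 1 T := by
    rw [stZ]
    simp only [one_pow, mul_one]
    exact (Finset.sum_subtype (Finset.univ.filter (IsStaircase n))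
      (fun x => by simp) (stWt n a b 0 0 1)).symm
  -- Step 2: restrict to α/β tableaux
  have h1 : ∑ T ∈ Finset.univ.filter (IsStaircase n), stWt n a b 0 0 1 T
      = ∑ T ∈ SP.ABs n, stWt n a b 0 0 1 T := by
    rw [SP.ABs, ← Finset.filter_filter]
    symm
    apply Finset.sum_filter_of_ne
    intro T _ hne
    by_contra hAB
    apply hne
    rw [SP.ABcond] at hAB
    push_neg at hAB
    obtain ⟨i, j, hij⟩ := hAB
    rcases (by by_cases hG : T i j = some SLetter.G
               · exact Or.inl hG
               · exact Or.inr (hij hG) :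
        T i j = some SLetter.G ∨ T i j = some SLetter.D) with hG | hD
    · have hc : countLetter n T SLetter.G ≠ 0 :=
        Finset.card_ne_zero_of_mem (Finset.mem_filter.mpr ⟨Finset.mem_univ (i, j), hG⟩)
      rw [stWt, zero_pow hc]
      ring
    · have hc : countLetter n T SLetter.D ≠ 0 :=
        Finset.card_ne_zero_of_mem (Finset.mem_filter.mpr ⟨Finset.mem_univ (i, j), hD⟩)
      rw [stWt, zero_pow hc]
      ring
  -- Step 3: weight on α/β tableaux
  have h2 : ∑ T ∈ SP.ABs n, stWt n a b 0 0 1 T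
      = ∑ T ∈ SP.ABs n, a ^ countLetter n T SLetter.A * b ^ countLetter n T SLetter.B
          * (1:R) ^ (SP.Free n T).card := by
    apply Finset.sum_congr rfl
    intro T hT
    have hAB := (SP.mem_ABs.mp hT).2
    rw [stWt, SP.countG_zero n T hAB, SP.countD_zero n T hAB]
    simp
  rw [h0, h1, h2, SP.Hsum a b n 1]
  apply Finset.prod_congr rfl
  intro j _
  push_cast
  ring
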